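/- arXiv:2507.04341 — 2 statements merged into one kernel-verified Lean document; each statement's English description precedes it below -/
import Mathlib

section
/- Let P_abs be the n×n matrix with last row all ones, P(n,n)=1, and all other entries zero, and Q_abs = P_abs − I. Then for τ ≥ 0, the matrix exponential Y = exp(τ·Q_abs) satisfies: Y(i,i) = e^{−τ} for i ≠ n, Y(n,j) = 1 − e^{−τ} for j ≠ n, Y(n,n) = 1, and all other entries are 0. -/
open NormedSpace in
lemma exp_absorb_aux (N : ℕ) (τ : ℝ)
    (P : Matrix (Fin (N + 2)) (Fin (N + 2)) ℝ)
    (hP : ∀ i j, P i j = if i = Fin.last (N + 1) then 1 else 0) :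
    NormedSpace.exp (τ • (P - 1)) = 1 + (1 - Real.exp (-τ)) • (P - 1) := by
  letI : SeminormedRing (Matrix (Fin (N + 2)) (Fin (N + 2)) ℝ) := Matrix.linftyOpSemiNormedRing
  letI : NormedRing (Matrix (Fin (N + 2)) (Fin (N + 2)) ℝ) := Matrix.linftyOpNormedRing
  letI : NormedAlgebra ℝ (Matrix (Fin (N + 2)) (Fin (N + 2)) ℝ) := Matrix.linftyOpNormedAlgebra
  set Q : Matrix (Fin (N + 2)) (Fin (N + 2)) ℝ := P - 1 with hQ
  have hPP : P * P = P := by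
    ext i j
    simp only [Matrix.mul_apply, hP]
    by_cases h : i = Fin.last (N + 1) <;> simp [h, Finset.sum_ite_eq']
  have hQQ : Q * Q = -Q := by
    rw [hQ]
    simp only [sub_mul, mul_sub, hPP, mul_one, one_mul]
    abel
  have hpow : ∀ k : ℕ, (τ • Q) ^ (k + 1) = ((-1 : ℝ) ^ k * τ ^ (k + 1)) • Q := by
    intro k
    induction k with
    | zero => simp
    | succ k ih =>
      rw [pow_succ, ih, Matrix.smul_mul, Matrix.mul_smul, hQQ, pow_succ, pow_succ]
      rw [smul_smul, smul_neg, ← neg_smul]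
      ring_nf
  have hsummable : Summable fun n : ℕ => (((Nat.factorial n : ℝ))⁻¹) • ((-τ) ^ n) :=
    NormedSpace.expSeries_summable' (𝕂 := ℝ) (-τ)
  have hsummable' : Summable fun k : ℕ => (((Nat.factorial (k+1) : ℝ))⁻¹) • ((-τ) ^ (k + 1)) :=
    (summable_nat_add_iff (f := fun n : ℕ => (((Nat.factorial n : ℝ))⁻¹) • ((-τ) ^ n)) 1).2 hsummable
  have hc : ∀ k : ℕ, (((Nat.factorial (k+1) : ℝ))⁻¹) • ((-τ) ^ (k + 1)) =
      -(((Nat.factorial (k+1) : ℝ))⁻¹ * ((-1 : ℝ) ^ k * τ ^ (k + 1))) := by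
    intro k
    rw [neg_pow, pow_succ (-1 : ℝ)]
    simp [smul_eq_mul]
  have hcs : Summable fun k : ℕ => ((Nat.factorial (k+1) : ℝ))⁻¹ * ((-1 : ℝ) ^ k * τ ^ (k + 1)) := by
    have := hsummable'.neg
    refine this.congr fun k => ?_
    rw [hc k, neg_neg]
  -- value of the scalar sum
  have hreal : NormedSpace.exp (-τ) = Real.exp (-τ) := by
    rw [Real.exp_eq_exp_ℝ]
  have hscalar : (∑' k : ℕ, ((Nat.factorial (k+1) : ℝ))⁻¹ * ((-1 : ℝ) ^ k * τ ^ (k + 1)))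
      = 1 - Real.exp (-τ) := by
    have h1 : Real.exp (-τ) = ∑' n : ℕ, ((Nat.factorial n : ℝ))⁻¹ • ((-τ) ^ n) := by
      rw [← hreal, NormedSpace.exp_eq_tsum ℝ]
    rw [h1, Summable.tsum_eq_zero_add hsummable]
    simp only [hc]
    rw [tsum_neg]
    simp
  -- now the matrix sum
  rw [NormedSpace.exp_eq_tsum ℝ]
  beta_reduce
  erw [Summable.tsum_eq_zero_add (NormedSpace.expSeries_summable' (𝕂 := ℝ) (τ • Q))]
  simp only [hpow, pow_zero, Nat.factorial_zero, Nat.cast_one, inv_one, one_smul, smul_smul]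
  rw [Summable.tsum_smul_const hcs, hscalar]
/-- Entries of the matrix exponential of the absorb rate matrix `Q_abs = P_abs - I`,
where `P_abs` has last row all ones and all other entries zero.  Here `n = N + 2 ≥ 2`
and the absorbing state is `Fin.last (N+1)`. -/
theorem stmt_2 (N : ℕ) (τ : ℝ) (hτ : 0 ≤ τ)
    (P : Matrix (Fin (N + 2)) (Fin (N + 2)) ℝ)
    (hP : ∀ i j, P i j = if i = Fin.last (N + 1) then 1 else 0) :
    (∀ i, i ≠ Fin.last (N + 1) →
      NormedSpace.exp (τ • (P - 1)) i i = Real.exp (-τ)) ∧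
    (∀ j, j ≠ Fin.last (N + 1) →
      NormedSpace.exp (τ • (P - 1)) (Fin.last (N + 1)) j = 1 - Real.exp (-τ)) ∧
    NormedSpace.exp (τ • (P - 1)) (Fin.last (N + 1)) (Fin.last (N + 1)) = 1 ∧
    (∀ i j, i ≠ j → i ≠ Fin.last (N + 1) →
      NormedSpace.exp (τ • (P - 1)) i j = 0) := by
  rw [exp_absorb_aux N τ P hP]
  refine ⟨fun i hi => ?_, fun j hj => ?_, ?_, fun i j hij hi => ?_⟩ <;>
    simp [Matrix.add_apply, Matrix.smul_apply, Matrix.sub_apply, Matrix.one_apply, hP,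
      Ne.symm, *, smul_eq_mul]
end

section
/- Let n ≥ 2, 0 ≤ p_m ≤ 1, and Q_roul = p_m·Q_abs + (1−p_m)·Q_unif where Q_abs and Q_unif are the absorb and (padded) uniform rate matrices. Then for σ ≥ 0 the matrix exponential Y = exp(σ·Q_roul) satisfies: Y(i,j) = e^{−σ p_m}·(1/(n−1))·(1 − e^{−(1−p_m)σ}) for i ≠ j with i,j ≠ n; Y(i,i) = e^{−σ p_m}·(1 − ((n−2)/(n−1))(1 − e^{−(1−p_m)σ})) for i ≠ n; Y(n,j) = 1 − e^{−σ p_m} for j ≠ n; Y(i,n) = 0 for i ≠ n; and Y(n,n) = 1. -/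
open Matrix NormedSpace

noncomputable section AuxRoulette

set_option maxHeartbeats 1000000 in
theorem aux_exp_smul_of_idem {m : Type*} [Fintype m] [DecidableEq m] (c : ℝ)
    (P : Matrix m m ℝ) (hP : P * P = P) :
    exp (c • P) = 1 + (Real.exp c - 1) • P := by
  letI : SeminormedRing (Matrix m m ℝ) := Matrix.linftyOpSemiNormedRing
  letI : NormedRing (Matrix m m ℝ) := Matrix.linftyOpNormedRing
  letI : NormedAlgebra ℝ (Matrix m m ℝ) := Matrix.linftyOpNormedAlgebra
  have hPpow : ∀ k : ℕ, P ^ (k + 1) = P := by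
    intro k; induction k with
    | zero => simp
    | succ k ih => rw [pow_succ, ih, hP]
  have hs0 : Summable fun n : ℕ => ((Nat.factorial n : ℝ))⁻¹ * c ^ n := by
    simpa [div_eq_mul_inv, mul_comm] using Real.summable_pow_div_factorial c
  have hs1 : Summable fun k : ℕ => ((Nat.factorial (k+1) : ℝ))⁻¹ * c ^ (k + 1) :=
    (summable_nat_add_iff 1).mpr hs0
  rw [exp_eq_tsum ℝ]
  beta_reduce
  erw [Summable.tsum_eq_zero_add (expSeries_summable' (𝕂 := ℝ) (c • P))]
  have hterm : ∀ k : ℕ, ((Nat.factorial (k+1) : ℝ))⁻¹ • (c • P) ^ (k + 1)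
      = ((Nat.factorial (k+1) : ℝ)⁻¹ * c ^ (k+1)) • P := by
    intro k; rw [smul_pow, hPpow, smul_smul]
  simp only [pow_zero, Nat.factorial_zero, Nat.cast_one, inv_one, one_smul, hterm]
  erw [Summable.tsum_smul_const hs1]
  congr 2
  have hexp : Real.exp c = ∑' n : ℕ, ((Nat.factorial n : ℝ))⁻¹ * c ^ n := by
    rw [Real.exp_eq_exp_ℝ, exp_eq_tsum ℝ]; simp [smul_eq_mul]
  rw [hexp, Summable.tsum_eq_zero_add hs0]
  simp

def auxPone (N : ℕ) : Matrix (Fin (N+2)) (Fin (N+2)) ℝ := fun i j =>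
  if j = Fin.last (N+1) then 0 else if i = Fin.last (N+1) then -1 else 1/(N+1)

def auxPtwo (N : ℕ) : Matrix (Fin (N+2)) (Fin (N+2)) ℝ := fun i j =>
  if i = Fin.last (N+1) ∨ j = Fin.last (N+1) then 0
  else (if i = j then 1 else 0) - 1/(N+1)

lemma aux_csne {n : ℕ} (k : Fin n) : Fin.castSucc k ≠ Fin.last n := (Fin.castSucc_lt_last k).ne

lemma aux_exists_castSucc {n : ℕ} (j : Fin (n+1)) (hj : j ≠ Fin.last n) :
    ∃ j' : Fin n, j = Fin.castSucc j' := ⟨j.castPred hj, (Fin.castSucc_castPred j hj).symm⟩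

lemma auxPone_mul_auxPone (N : ℕ) : auxPone N * auxPone N = auxPone N := by
  have hc : ((N:ℝ)+1) ≠ 0 := by positivity
  ext i j
  rw [Matrix.mul_apply, Fin.sum_univ_castSucc]
  by_cases hj : j = Fin.last (N+1)
  · simp [auxPone, hj]
  · obtain ⟨j', rfl⟩ := aux_exists_castSucc j hj
    by_cases hi : i = Fin.last (N+1)
    · simp only [auxPone, aux_csne, if_neg, if_false, hi, if_pos rfl, if_true, mul_zero,
        add_zero, Finset.sum_const, Finset.card_univ, Fintype.card_fin, nsmul_eq_mul]
      field_simp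
      push_cast; ring
    · obtain ⟨i', rfl⟩ := aux_exists_castSucc i hi
      simp only [auxPone, aux_csne, if_neg, if_false, mul_zero, add_zero,
        Finset.sum_const, Finset.card_univ, Fintype.card_fin, nsmul_eq_mul]
      field_simp
      push_cast; simp

lemma auxPtwo_mul_auxPtwo (N : ℕ) : auxPtwo N * auxPtwo N = auxPtwo N := by
  have hc : ((N:ℝ)+1) ≠ 0 := by positivity
  ext i j
  rw [Matrix.mul_apply, Fin.sum_univ_castSucc]
  by_cases hi : i = Fin.last (N+1)
  · simp [auxPtwo, hi]
  · by_cases hj : j = Fin.last (N+1)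
    · simp [auxPtwo, hj]
    · obtain ⟨i', rfl⟩ := aux_exists_castSucc i hi
      obtain ⟨j', rfl⟩ := aux_exists_castSucc j hj
      simp only [auxPtwo, aux_csne, if_neg, if_false, or_false, false_or, or_self,
        Fin.castSucc_inj, mul_zero, add_zero]
      simp only [sub_mul, mul_sub, ite_mul, mul_ite, one_mul, mul_one, zero_mul, mul_zero,
        Finset.sum_sub_distrib, Finset.sum_ite_eq, Finset.sum_ite_eq', Finset.mem_univ,
        if_true, Finset.sum_const, Finset.card_univ, Fintype.card_fin, nsmul_eq_mul]
      by_cases hij : i' = j' <;> simp [hij] <;> field_simp <;> simp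

lemma auxPone_mul_auxPtwo (N : ℕ) : auxPone N * auxPtwo N = 0 := by
  have hc : ((N:ℝ)+1) ≠ 0 := by positivity
  ext i j
  rw [Matrix.mul_apply, Fin.sum_univ_castSucc]
  by_cases hj : j = Fin.last (N+1)
  · simp [auxPone, auxPtwo, hj]
  · obtain ⟨j', rfl⟩ := aux_exists_castSucc j hj
    by_cases hi : i = Fin.last (N+1)
    · simp only [auxPone, auxPtwo, aux_csne, if_neg, if_false, or_false, false_or,
        Fin.castSucc_inj, hi, if_pos rfl, if_true, mul_zero, add_zero, Matrix.zero_apply]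
      simp only [mul_sub, mul_ite, mul_one, mul_zero, neg_mul, one_mul,
        Finset.sum_sub_distrib, Finset.sum_ite_eq, Finset.sum_ite_eq', Finset.mem_univ,
        if_true, Finset.sum_const, Finset.card_univ, Fintype.card_fin, nsmul_eq_mul,
        Finset.sum_neg_distrib]
      field_simp
      push_cast; ring
    · obtain ⟨i', rfl⟩ := aux_exists_castSucc i hi
      simp only [auxPone, auxPtwo, aux_csne, if_neg, if_false, or_false, false_or,
        Fin.castSucc_inj, mul_zero, add_zero, Matrix.zero_apply]
      simp only [mul_sub, mul_ite, mul_one, mul_zero, one_mul,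
        Finset.sum_sub_distrib, Finset.sum_ite_eq, Finset.sum_ite_eq', Finset.mem_univ,
        if_true, Finset.sum_const, Finset.card_univ, Fintype.card_fin, nsmul_eq_mul]
      field_simp
      push_cast; ring

lemma auxPtwo_mul_auxPone (N : ℕ) : auxPtwo N * auxPone N = 0 := by
  have hc : ((N:ℝ)+1) ≠ 0 := by positivity
  ext i j
  rw [Matrix.mul_apply, Fin.sum_univ_castSucc]
  by_cases hi : i = Fin.last (N+1)
  · simp [auxPone, auxPtwo, hi]
  · obtain ⟨i', rfl⟩ := aux_exists_castSucc i hi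
    by_cases hj : j = Fin.last (N+1)
    · simp [auxPone, auxPtwo, hj, aux_csne]
    · obtain ⟨j', rfl⟩ := aux_exists_castSucc j hj
      simp only [auxPone, auxPtwo, aux_csne, if_neg, if_false, or_false, false_or,
        Fin.castSucc_inj, mul_zero, add_zero, Matrix.zero_apply]
      simp only [sub_mul, ite_mul, one_mul, zero_mul,
        Finset.sum_sub_distrib, Finset.sum_ite_eq, Finset.sum_ite_eq', Finset.mem_univ,
        if_true, Finset.sum_const, Finset.card_univ, Fintype.card_fin, nsmul_eq_mul]
      field_simp
      push_cast; ring

end AuxRoulette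

/-- Entries of the matrix exponential of the roulette rate matrix
`Q_roul = p_m • Q_abs + (1 - p_m) • Q_unif`, with `n = N + 2` states and absorbing
state `Fin.last (N+1)`. -/
theorem stmt_5 (N : ℕ) (pm σ : ℝ) (hpm0 : 0 ≤ pm) (hpm1 : pm ≤ 1) (hσ : 0 ≤ σ)
    (Qu Qa : Matrix (Fin (N + 2)) (Fin (N + 2)) ℝ)
    (hQu : ∀ i j, Qu i j =
      if i ≠ Fin.last (N + 1) ∧ j ≠ Fin.last (N + 1) then
        (1 / (N + 1 : ℝ) - if i = j then 1 else 0)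
      else 0)
    (hQa : ∀ i j, Qa i j =
      (if i = Fin.last (N + 1) then (1 : ℝ) else 0) - (if i = j then 1 else 0)) :
    (∀ i j, i ≠ j → i ≠ Fin.last (N + 1) → j ≠ Fin.last (N + 1) →
      NormedSpace.exp (σ • (pm • Qa + (1 - pm) • Qu)) i j
        = Real.exp (-(σ * pm)) * (1 / (N + 1 : ℝ)) * (1 - Real.exp (-((1 - pm) * σ)))) ∧
    (∀ i, i ≠ Fin.last (N + 1) →
      NormedSpace.exp (σ • (pm • Qa + (1 - pm) • Qu)) i i
        = Real.exp (-(σ * pm)) *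
            (1 - ((N : ℝ) / (N + 1 : ℝ)) * (1 - Real.exp (-((1 - pm) * σ))))) ∧
    (∀ j, j ≠ Fin.last (N + 1) →
      NormedSpace.exp (σ • (pm • Qa + (1 - pm) • Qu)) (Fin.last (N + 1)) j
        = 1 - Real.exp (-(σ * pm))) ∧
    (∀ i, i ≠ Fin.last (N + 1) →
      NormedSpace.exp (σ • (pm • Qa + (1 - pm) • Qu)) i (Fin.last (N + 1)) = 0) ∧
    NormedSpace.exp (σ • (pm • Qa + (1 - pm) • Qu))
      (Fin.last (N + 1)) (Fin.last (N + 1)) = 1 := by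
  have hc : ((N:ℝ)+1) ≠ 0 := by positivity
  have hA : σ • (pm • Qa + (1 - pm) • Qu)
      = (-(σ*pm)) • auxPone N + (-σ) • auxPtwo N := by
    ext i j
    simp only [Matrix.smul_apply, Matrix.add_apply, hQa, hQu, auxPone, auxPtwo, smul_eq_mul]
    by_cases hj : j = Fin.last (N+1)
    · subst hj
      by_cases hi : i = Fin.last (N+1)
      · subst hi; simp
      · simp [hi]
    · by_cases hi : i = Fin.last (N+1)
      · subst hi
        simp [hj, Ne.symm hj]
      · by_cases hij : i = j <;> simp [hi, hj, hij] <;> ring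
  have hcomm : Commute ((-(σ*pm)) • auxPone N) ((-σ) • auxPtwo N) := by
    unfold Commute SemiconjBy
    rw [smul_mul_assoc, mul_smul_comm, smul_mul_assoc, mul_smul_comm,
      auxPone_mul_auxPtwo, auxPtwo_mul_auxPone]
    simp
  have hE : Real.exp (-σ) = Real.exp (-(σ*pm)) * Real.exp (-((1-pm)*σ)) := by
    rw [← Real.exp_add]; ring_nf
  have key : exp (σ • (pm • Qa + (1 - pm) • Qu))
      = 1 + (Real.exp (-(σ*pm)) - 1) • auxPone N
          + (Real.exp (-(σ*pm)) * Real.exp (-((1-pm)*σ)) - 1) • auxPtwo N := by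
    rw [hA, Matrix.exp_add_of_commute _ _ hcomm,
      aux_exp_smul_of_idem _ _ (auxPone_mul_auxPone N),
      aux_exp_smul_of_idem _ _ (auxPtwo_mul_auxPtwo N), ← hE]
    rw [add_mul, one_mul, mul_add, mul_one, smul_mul_assoc, mul_smul_comm,
      auxPone_mul_auxPtwo, smul_zero, smul_zero, add_zero]
    abel
  refine ⟨?_, ?_, ?_, ?_, ?_⟩
  · intro i j hij hi hj
    rw [key]
    simp only [Matrix.add_apply, Matrix.smul_apply, Matrix.one_apply, auxPone, auxPtwo,
      smul_eq_mul, hi, hj, hij, if_false, if_neg, or_self]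
    simp [hij, hi, hj]
    ring
  · intro i hi
    rw [key]
    simp only [Matrix.add_apply, Matrix.smul_apply, Matrix.one_apply, auxPone, auxPtwo,
      smul_eq_mul]
    simp [hi]
    field_simp
    ring
  · intro j hj
    rw [key]
    simp only [Matrix.add_apply, Matrix.smul_apply, Matrix.one_apply, auxPone, auxPtwo,
      smul_eq_mul]
    simp [hj, Ne.symm hj]
  · intro i hi
    rw [key]
    simp only [Matrix.add_apply, Matrix.smul_apply, Matrix.one_apply, auxPone, auxPtwo,
      smul_eq_mul]
    simp [hi]
  · rw [key]
    simp [auxPone, auxPtwo]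
end
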